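/- Let ε₀ > 0, let τ₀ = 0, τ_{n+1} = inf{ t ≥ τ_n : X_t − X_{τ_n} ∉ (−log(1+ε₀), log(1+ε₀)) } ∧ T, R_n = sign(X_{τ_n} − X_{τ_{n−1}}) if τ_n < T and R_n = 0 if τ_n = T, and Z_n = Y_0 (1+ε₀)^{R_1 + ⋯ + R_n} with Y_t = exp(X_t). Suppose Q is a probability measure equivalent to P under which (Z_n, 𝓕_{τ_n})_{n≥0} is a uniformly integrable martingale, let Z_∞ = lim_{n→∞} Z_n, and define Z̃_t = E_Q[Z_∞ | 𝓕_t] for t ∈ [0,T]. Then (1+ε₀)^{−3} Y_t ≤ Z̃_t ≤ (1+ε₀)³ Y_t almost surely for every t ∈ [0,T]; in particular Z̃ together with Q is an ε-consistent price system for Y with ε = (1+ε₀)³ − 1. -/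

import Mathlib

open MeasureTheory Set Filter

noncomputable section

/-- The stopping times `τ₀ = 0`,
`τ_{n+1} = inf{ t ≥ τ_n : X_t − X_{τ_n} ∉ (−log(1+ε₀), log(1+ε₀)) } ∧ T`. -/
def tauSeq {Ω : Type*} (X : ℝ → Ω → ℝ) (T ε₀ : ℝ) : ℕ → Ω → ℝ
  | 0 => fun _ => 0
  | n + 1 => fun ω =>
      sInf ({t | tauSeq X T ε₀ n ω ≤ t ∧
        X t ω - X (tauSeq X T ε₀ n ω) ω ∉
          Ioo (-Real.log (1 + ε₀)) (Real.log (1 + ε₀))} ∪ {T})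

/-- `R_n = sign(X_{τ_n} − X_{τ_{n−1}})` if `τ_n < T`, and `R_n = 0` if `τ_n = T`
(for `n ≥ 1`; the value `R_0 = 0` is irrelevant). -/
def Rseq {Ω : Type*} (X : ℝ → Ω → ℝ) (T ε₀ : ℝ) : ℕ → Ω → ℝ
  | 0 => fun _ => 0
  | n + 1 => fun ω =>
      if tauSeq X T ε₀ (n + 1) ω < T then
        Real.sign (X (tauSeq X T ε₀ (n + 1) ω) ω - X (tauSeq X T ε₀ n ω) ω)
      else 0

/-- `Z_0 = Y_0 = exp(X_0)` and `Z_n = Z_0 (1+ε₀)^{R_1 + ⋯ + R_n}`. -/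
def Zseq {Ω : Type*} (X : ℝ → Ω → ℝ) (T ε₀ : ℝ) (n : ℕ) (ω : Ω) : ℝ :=
  Real.exp (X 0 ω) * (1 + ε₀) ^ (∑ i ∈ Finset.range n, Rseq X T ε₀ (i + 1) ω)

/-- A strictly positive adapted process `Y` on `[0,T]` admits an `ε`-consistent price system
if there are a probability measure `Q` equivalent to `P` and a `Q`-martingale `Ỹ` on `[0,T]`
(with respect to the filtration `ℱ`) such that
`(1+ε)⁻¹ Y_t ≤ Ỹ_t ≤ (1+ε) Y_t` a.s. for all `t ∈ [0,T]`. -/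
def AdmitsCPS {Ω : Type*} {m : MeasurableSpace Ω} (P : Measure Ω) (ℱ : Filtration ℝ m)
    (T : ℝ) (Y : ℝ → Ω → ℝ) (ε : ℝ) : Prop :=
  ∃ (Q : Measure Ω) (Yt : ℝ → Ω → ℝ), IsProbabilityMeasure Q ∧ Q ≪ P ∧ P ≪ Q ∧
    (∀ t ∈ Icc (0:ℝ) T, StronglyMeasurable[ℱ t] (Yt t)) ∧
    (∀ t ∈ Icc (0:ℝ) T, Integrable (Yt t) Q) ∧
    (∀ s ∈ Icc (0:ℝ) T, ∀ t ∈ Icc (0:ℝ) T, s ≤ t → Q[Yt t | ℱ s] =ᵐ[Q] Yt s) ∧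
    (∀ t ∈ Icc (0:ℝ) T, ∀ᵐ ω ∂P, (1+ε)⁻¹ * Y t ω ≤ Yt t ω ∧ Yt t ω ≤ (1+ε) * Y t ω)

section Det

variable {Ω : Type*} (X : ℝ → Ω → ℝ) (T ε₀ : ℝ) (ω : Ω)

/-- The set whose infimum is `τ_{n+1}`. -/
def tauSet (n : ℕ) : Set ℝ :=
  {t | tauSeq X T ε₀ n ω ≤ t ∧
    X t ω - X (tauSeq X T ε₀ n ω) ω ∉
      Ioo (-Real.log (1 + ε₀)) (Real.log (1 + ε₀))} ∪ {T}

lemma tauSeq_succ (n : ℕ) : tauSeq X T ε₀ (n + 1) ω = sInf (tauSet X T ε₀ ω n) := rfl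

variable {X T ε₀ ω}

variable (hT : 0 < T) (hε₀ : 0 < ε₀)

lemma tau_bdd (hT : 0 < T) : ∀ n, 0 ≤ tauSeq X T ε₀ n ω ∧ tauSeq X T ε₀ n ω ≤ T := by
  intro n
  induction n with
  | zero => exact ⟨le_refl _, hT.le⟩
  | succ n ih =>
    have hbdd : BddBelow (tauSet X T ε₀ ω n) := by
      refine ⟨0, ?_⟩
      rintro t (⟨ht, -⟩ | rfl)
      · exact ih.1.trans ht
      · exact hT.le
    constructor
    · rw [tauSeq_succ]
      refine le_csInf (by exact ⟨T, Or.inr rfl⟩) ?_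
      rintro t (⟨ht, -⟩ | rfl)
      · exact ih.1.trans ht
      · exact hT.le
    · rw [tauSeq_succ]
      exact csInf_le hbdd (Or.inr rfl)

lemma tauSet_bddBelow (hT : 0 < T) (n : ℕ) : BddBelow (tauSet X T ε₀ ω n) := by
  refine ⟨0, ?_⟩
  rintro t (⟨ht, -⟩ | rfl)
  · exact (tau_bdd hT n).1.trans ht
  · exact hT.le

lemma tau_le_succ (hT : 0 < T) (n : ℕ) : tauSeq X T ε₀ n ω ≤ tauSeq X T ε₀ (n + 1) ω := by
  rw [tauSeq_succ]
  refine le_csInf ⟨T, Or.inr rfl⟩ ?_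
  rintro t (⟨ht, -⟩ | rfl)
  · exact ht
  · exact (tau_bdd hT n).2

lemma tau_in_band (hT : 0 < T) {n : ℕ} {t : ℝ} (h1 : tauSeq X T ε₀ n ω ≤ t)
    (h2 : t < tauSeq X T ε₀ (n + 1) ω) :
    X t ω - X (tauSeq X T ε₀ n ω) ω ∈ Ioo (-Real.log (1 + ε₀)) (Real.log (1 + ε₀)) := by
  by_contra h
  have : t ∈ tauSet X T ε₀ ω n := Or.inl ⟨h1, h⟩
  exact absurd (csInf_le (tauSet_bddBelow hT n) this) (not_le.2 (by rwa [← tauSeq_succ]))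

lemma tau_eq_T_succ (hT : 0 < T) {n : ℕ} (h : tauSeq X T ε₀ n ω = T) :
    tauSeq X T ε₀ (n + 1) ω = T := by
  refine le_antisymm (tau_bdd hT (n + 1)).2 ?_
  rw [tauSeq_succ]
  refine le_csInf ⟨T, Or.inr rfl⟩ ?_
  rintro t (⟨ht, -⟩ | h')
  · rw [h] at ht; exact ht
  · exact (mem_singleton_iff.1 h').ge


lemma tendsto_max_sub (a b : ℝ) (h : a < b) :
    Tendsto (fun k : ℕ => max a (b - 1 / (k + 1))) atTop (nhds b) := by
  have h1 : Tendsto (fun k : ℕ => b - 1 / (k + 1 : ℝ)) atTop (nhds b) := by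
    have := tendsto_one_div_add_atTop_nhds_zero_nat (𝕜 := ℝ)
    have := (tendsto_const_nhds (x := b) (f := atTop (α := ℕ))).sub this
    simpa using this
  refine tendsto_of_tendsto_of_tendsto_of_le_of_le h1 tendsto_const_nhds
    (fun k => le_max_right _ _)
    (fun k => max_le h.le (by linarith [one_div_pos.2 (by positivity : (0:ℝ) < (k:ℝ) + 1)]))

lemma tau_band_closed (hT : 0 < T) (hcont : ContinuousOn (fun t => X t ω) (Icc 0 T))
    {n : ℕ} (h : tauSeq X T ε₀ n ω < tauSeq X T ε₀ (n + 1) ω) :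
    X (tauSeq X T ε₀ (n + 1) ω) ω - X (tauSeq X T ε₀ n ω) ω ∈
      Icc (-Real.log (1 + ε₀)) (Real.log (1 + ε₀)) := by
  set a := tauSeq X T ε₀ n ω with ha
  set b := tauSeq X T ε₀ (n + 1) ω with hb
  have ha0 : 0 ≤ a := (tau_bdd hT n).1
  have hbT : b ≤ T := (tau_bdd hT (n + 1)).2
  set u : ℕ → ℝ := fun k => max a (b - 1 / (k + 1)) with hu
  have hub : Tendsto u atTop (nhds b) := tendsto_max_sub a b h
  have hu_mem : ∀ k, a ≤ u k ∧ u k < b := by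
    intro k
    refine ⟨le_max_left _ _, max_lt h (by
      have : (0:ℝ) < 1 / (k + 1) := one_div_pos.2 (by positivity)
      linarith)⟩
  have hXu : Tendsto (fun k => X (u k) ω) atTop (nhds (X b ω)) := by
    refine ((hcont b ⟨ha0.trans ((hu_mem 0).1.trans (hu_mem 0).2.le), hbT⟩).tendsto).comp ?_
    refine tendsto_nhdsWithin_of_tendsto_nhds_of_eventually_within _ hub
      (Eventually.of_forall fun k => ⟨ha0.trans (hu_mem k).1, ((hu_mem k).2.le).trans hbT⟩)
  refine isClosed_Icc.mem_of_tendsto (hXu.sub_const (X a ω)) (Eventually.of_forall fun k => ?_)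
  exact Ioo_subset_Icc_self (tau_in_band hT (hu_mem k).1 (hu_mem k).2)

lemma tau_hit (hT : 0 < T) (hcont : ContinuousOn (fun t => X t ω) (Icc 0 T))
    {n : ℕ} (h : tauSeq X T ε₀ (n + 1) ω < T) :
    X (tauSeq X T ε₀ (n + 1) ω) ω - X (tauSeq X T ε₀ n ω) ω ∉
      Ioo (-Real.log (1 + ε₀)) (Real.log (1 + ε₀)) := by
  set a := tauSeq X T ε₀ n ω with ha
  set b := tauSeq X T ε₀ (n + 1) ω with hb
  have hb0 : 0 ≤ b := (tau_bdd hT (n + 1)).1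
  have hex : ∀ k : ℕ, ∃ x, (a ≤ x ∧ X x ω - X a ω ∉ Ioo (-Real.log (1 + ε₀)) (Real.log (1 + ε₀)))
      ∧ b ≤ x ∧ x ≤ b + 1 / (k + 1) ∧ x ≤ T := by
    intro k
    have hpos : 0 < min (1 / ((k:ℝ) + 1)) (T - b) :=
      lt_min (one_div_pos.2 (by positivity)) (by linarith)
    have hlt : sInf (tauSet X T ε₀ ω n) < b + min (1 / ((k:ℝ) + 1)) (T - b) := by
      rw [← tauSeq_succ]; linarith
    obtain ⟨x, hxS, hxlt⟩ := exists_lt_of_csInf_lt ⟨T, Or.inr rfl⟩ hlt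
    have hxb : b ≤ x := by
      rw [hb, tauSeq_succ]; exact csInf_le (tauSet_bddBelow hT n) hxS
    have hxT : x < T := lt_of_lt_of_le hxlt (by
      have := min_le_right (1 / ((k:ℝ) + 1)) (T - b); linarith)
    rcases hxS with hxS | hxS
    · exact ⟨x, hxS, hxb, hxlt.le.trans (by
        have := min_le_left (1 / ((k:ℝ) + 1)) (T - b); linarith), hxT.le⟩
    · exact absurd (mem_singleton_iff.1 hxS) hxT.ne
  choose u hu1 hu2 hu3 hu4 using hex
  have hub : Tendsto u atTop (nhds b) := by
    have h1 : Tendsto (fun k : ℕ => b + 1 / (k + 1 : ℝ)) atTop (nhds b) := by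
      have := tendsto_one_div_add_atTop_nhds_zero_nat (𝕜 := ℝ)
      have := (tendsto_const_nhds (x := b) (f := atTop (α := ℕ))).add this
      simpa using this
    exact tendsto_of_tendsto_of_tendsto_of_le_of_le tendsto_const_nhds h1 hu2 hu3
  have hXu : Tendsto (fun k => X (u k) ω) atTop (nhds (X b ω)) := by
    refine ((hcont b ⟨hb0, (tau_bdd hT (n+1)).2⟩).tendsto).comp ?_
    exact tendsto_nhdsWithin_of_tendsto_nhds_of_eventually_within _ hub
      (Eventually.of_forall fun k => ⟨hb0.trans (hu2 k), hu4 k⟩)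
  have := (isOpen_Ioo (a := -Real.log (1 + ε₀)) (b := Real.log (1 + ε₀))).isClosed_compl.mem_of_tendsto
    (hXu.sub_const (X a ω)) (Eventually.of_forall fun k => (hu1 k).2)
  exact this

lemma tau_lt_succ (hT : 0 < T) (hε₀ : 0 < ε₀) (hcont : ContinuousOn (fun t => X t ω) (Icc 0 T))
    {n : ℕ} (h : tauSeq X T ε₀ (n + 1) ω < T) :
    tauSeq X T ε₀ n ω < tauSeq X T ε₀ (n + 1) ω := by
  rcases lt_or_eq_of_le (tau_le_succ hT n) with h' | h'
  · exact h'
  · exfalso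
    apply tau_hit hT hcont h
    rw [← h', sub_self]
    have hL : 0 < Real.log (1 + ε₀) := Real.log_pos (by linarith)
    exact ⟨by linarith, hL⟩


lemma exp_band {a b L y : ℝ} (hy : Real.exp L = y) (h : |a - b| ≤ 2 * L) :
    Real.exp a ≤ y ^ 2 * Real.exp b ∧ Real.exp b ≤ y ^ 2 * Real.exp a := by
  have hy2 : Real.exp (2 * L) = y ^ 2 := by
    rw [two_mul, Real.exp_add, hy]; ring
  obtain ⟨h1, h2⟩ := abs_le.1 h
  constructor
  · calc Real.exp a = Real.exp b * Real.exp (a - b) := by rw [← Real.exp_add]; ring_nf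
    _ ≤ Real.exp b * Real.exp (2 * L) := by
        exact mul_le_mul_of_nonneg_left (Real.exp_le_exp.2 h2) (Real.exp_pos b).le
    _ = y ^ 2 * Real.exp b := by rw [hy2]; ring
  · calc Real.exp b = Real.exp a * Real.exp (b - a) := by rw [← Real.exp_add]; ring_nf
    _ ≤ Real.exp a * Real.exp (2 * L) := by
        refine mul_le_mul_of_nonneg_left (Real.exp_le_exp.2 (by linarith)) (Real.exp_pos a).le
    _ = y ^ 2 * Real.exp a := by rw [hy2]; ring

lemma Zseq_succ_eq (hε₀ : 0 < ε₀) (n : ℕ) :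
    Zseq X T ε₀ (n + 1) ω = Zseq X T ε₀ n ω * (1 + ε₀) ^ (Rseq X T ε₀ (n + 1) ω) := by
  simp only [Zseq, Finset.sum_range_succ, Real.rpow_add (by linarith : (0:ℝ) < 1 + ε₀)]; ring

lemma Rseq_succ_def (n : ℕ) :
    Rseq X T ε₀ (n + 1) ω = if tauSeq X T ε₀ (n + 1) ω < T then
      Real.sign (X (tauSeq X T ε₀ (n + 1) ω) ω - X (tauSeq X T ε₀ n ω) ω) else 0 := rfl

lemma Zseq_eq_exp (hT : 0 < T) (hε₀ : 0 < ε₀)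
    (hcont : ContinuousOn (fun t => X t ω) (Icc 0 T)) :
    ∀ n, tauSeq X T ε₀ n ω < T → Zseq X T ε₀ n ω = Real.exp (X (tauSeq X T ε₀ n ω) ω) := by
  have hL : 0 < Real.log (1 + ε₀) := Real.log_pos (by linarith)
  have hexpL : Real.exp (Real.log (1 + ε₀)) = 1 + ε₀ := Real.exp_log (by linarith)
  intro n
  induction n with
  | zero =>
    intro _
    show Real.exp (X 0 ω) * (1 + ε₀) ^ ((0:ℝ)) = _
    rw [Real.rpow_zero, mul_one]; rfl
  | succ n ih =>
    intro h
    have hnT : tauSeq X T ε₀ n ω < T := lt_of_le_of_lt (tau_le_succ hT n) h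
    have hlt : tauSeq X T ε₀ n ω < tauSeq X T ε₀ (n + 1) ω := tau_lt_succ hT hε₀ hcont h
    have hIcc := tau_band_closed hT hcont (ε₀ := ε₀) hlt
    have hnot := tau_hit hT hcont (ε₀ := ε₀) h
    set Δ := X (tauSeq X T ε₀ (n + 1) ω) ω - X (tauSeq X T ε₀ n ω) ω with hΔ
    have hcases : Δ = Real.log (1 + ε₀) ∨ Δ = -Real.log (1 + ε₀) := by
      rcases not_and_or.1 hnot with h' | h'
      · right; exact le_antisymm (by linarith [hIcc.1, not_lt.1 h']) hIcc.1
      · left; exact le_antisymm hIcc.2 (not_lt.1 h')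
    have hR : Rseq X T ε₀ (n + 1) ω = Real.sign Δ := by
      rw [Rseq_succ_def, if_pos h]
    rw [Zseq_succ_eq hε₀, ih hnT, hR]
    rcases hcases with hc | hc
    · rw [hc, Real.sign_of_pos hL, Real.rpow_one, ← hexpL, ← Real.exp_add]
      congr 1
      have hval : X (tauSeq X T ε₀ (n + 1) ω) ω - X (tauSeq X T ε₀ n ω) ω
          = Real.log (1 + ε₀) := hΔ ▸ hc
      linarith
    · rw [hc, Real.sign_of_neg (by linarith), Real.rpow_neg_one, ← hexpL, ← Real.exp_neg,
        ← Real.exp_add]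
      congr 1
      have hval : X (tauSeq X T ε₀ (n + 1) ω) ω - X (tauSeq X T ε₀ n ω) ω
          = -Real.log (1 + ε₀) := hΔ ▸ hc
      linarith

lemma Zseq_succ_of_eq_T (hε₀ : 0 < ε₀) {n : ℕ} (h : tauSeq X T ε₀ (n + 1) ω = T) :
    Zseq X T ε₀ (n + 1) ω = Zseq X T ε₀ n ω := by
  have hR : Rseq X T ε₀ (n + 1) ω = 0 := by
    rw [Rseq_succ_def, if_neg (by rw [h]; exact lt_irrefl T)]
  rw [Zseq_succ_eq hε₀, hR, Real.rpow_zero, mul_one]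

lemma tau_eq_T_of_ge (hT : 0 < T) {n : ℕ} (h : tauSeq X T ε₀ n ω = T) :
    ∀ m, n ≤ m → tauSeq X T ε₀ m ω = T := by
  intro m hm
  induction m, hm using Nat.le_induction with
  | base => exact h
  | succ m _ ih => exact tau_eq_T_succ hT ih

lemma exists_retire (hT : 0 < T) (hret : ∃ N, tauSeq X T ε₀ N ω = T) :
    ∃ n, tauSeq X T ε₀ n ω < T ∧ tauSeq X T ε₀ (n + 1) ω = T := by
  classical
  have hex : ∃ N, tauSeq X T ε₀ N ω = T := hret
  have hMT := Nat.find_spec hex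
  rcases Nat.eq_zero_or_pos (Nat.find hex) with h0 | h0
  · rw [h0] at hMT
    have h00 : (0:ℝ) = T := hMT
    exact absurd h00 hT.ne
  · obtain ⟨n, hn⟩ : ∃ n, Nat.find hex = n + 1 := ⟨Nat.find hex - 1, by omega⟩
    rw [hn] at hMT
    refine ⟨n, ?_, hMT⟩
    have hmin := Nat.find_min hex (m := n) (by omega)
    exact lt_of_le_of_ne (tau_bdd hT n).2 hmin

lemma Zseq_eventually (hT : 0 < T) (hε₀ : 0 < ε₀)
    (hcont : ContinuousOn (fun t => X t ω) (Icc 0 T))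
    {n : ℕ} (h1 : tauSeq X T ε₀ n ω < T) (h2 : tauSeq X T ε₀ (n + 1) ω = T) :
    ∀ m, n ≤ m → Zseq X T ε₀ m ω = Real.exp (X (tauSeq X T ε₀ n ω) ω) := by
  intro m hm
  induction m, hm using Nat.le_induction with
  | base => exact Zseq_eq_exp hT hε₀ hcont n h1
  | succ m hm ih =>
    rw [Zseq_succ_of_eq_T hε₀ (tau_eq_T_of_ge hT h2 (m + 1) (by omega)), ih]

lemma Zseq_band (hT : 0 < T) (hε₀ : 0 < ε₀)
    (hcont : ContinuousOn (fun t => X t ω) (Icc 0 T)) {n : ℕ} {t : ℝ}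
    (h1 : tauSeq X T ε₀ n ω ≤ t) (h2 : t < tauSeq X T ε₀ (n + 1) ω) :
    Real.exp (X t ω) ≤ (1 + ε₀) ^ 2 * Zseq X T ε₀ (n + 1) ω ∧
      Zseq X T ε₀ (n + 1) ω ≤ (1 + ε₀) ^ 2 * Real.exp (X t ω) := by
  have hL : 0 < Real.log (1 + ε₀) := Real.log_pos (by linarith)
  have hexpL : Real.exp (Real.log (1 + ε₀)) = 1 + ε₀ := Real.exp_log (by linarith)
  have hband := tau_in_band hT (ε₀ := ε₀) h1 h2
  have habs1 : |X t ω - X (tauSeq X T ε₀ n ω) ω| ≤ Real.log (1 + ε₀) :=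
    abs_le.2 ⟨hband.1.le, hband.2.le⟩
  have hnT : tauSeq X T ε₀ n ω < T :=
    lt_of_lt_of_le (lt_of_le_of_lt h1 h2) (tau_bdd hT (n + 1)).2
  rcases lt_or_eq_of_le (tau_bdd hT (n + 1)).2 with hlt | heq
  · -- τ (n+1) < T
    have hZ : Zseq X T ε₀ (n + 1) ω = Real.exp (X (tauSeq X T ε₀ (n + 1) ω) ω) :=
      Zseq_eq_exp hT hε₀ hcont (n + 1) hlt
    have hIcc := tau_band_closed hT hcont (ε₀ := ε₀) (lt_of_le_of_lt h1 h2)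
    have habs2 : |X (tauSeq X T ε₀ (n + 1) ω) ω - X (tauSeq X T ε₀ n ω) ω| ≤
        Real.log (1 + ε₀) := abs_le.2 ⟨hIcc.1, hIcc.2⟩
    have habs : |X t ω - X (tauSeq X T ε₀ (n + 1) ω) ω| ≤ 2 * Real.log (1 + ε₀) := by
      calc |X t ω - X (tauSeq X T ε₀ (n + 1) ω) ω|
          = |(X t ω - X (tauSeq X T ε₀ n ω) ω) -
              (X (tauSeq X T ε₀ (n + 1) ω) ω - X (tauSeq X T ε₀ n ω) ω)| := by ring_nf
        _ ≤ _ := by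
            refine (abs_sub _ _).trans ?_
            linarith
    rw [hZ]
    exact exp_band hexpL habs
  · -- τ (n+1) = T
    have hZ : Zseq X T ε₀ (n + 1) ω = Real.exp (X (tauSeq X T ε₀ n ω) ω) := by
      rw [Zseq_succ_of_eq_T hε₀ heq]
      exact Zseq_eq_exp hT hε₀ hcont n hnT
    rw [hZ]
    refine exp_band hexpL ?_
    calc |X t ω - X (tauSeq X T ε₀ n ω) ω| ≤ Real.log (1 + ε₀) := habs1
      _ ≤ 2 * Real.log (1 + ε₀) := by linarith

end Det

/-- Third step of the proof of Theorem 2.2 of the paper: if `Q ∼ P` makes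
`(Z_n, ℱ_{τ_n})` a uniformly integrable martingale, `Z_∞ = lim_n Z_n`, and
`Z̃_t = E_Q[Z_∞ | ℱ_t]`, then `(1+ε₀)⁻³ Y_t ≤ Z̃_t ≤ (1+ε₀)³ Y_t` a.s. for all `t ∈ [0,T]`,
where `Y_t = exp(X_t)`; in particular `Y` admits an `ε`-CPS with `ε = (1+ε₀)³ − 1`. -/
theorem CPS_from_retired_walk {Ω : Type*} {m : MeasurableSpace Ω} (P : Measure Ω)
    [IsProbabilityMeasure P] (ℱ : Filtration ℝ m) (T : ℝ) (hT : 0 < T)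
    (X : ℝ → Ω → ℝ) (hadp : Adapted ℱ X)
    (hcont : ∀ ω, ContinuousOn (fun t => X t ω) (Icc 0 T))
    (htriv : ∀ s : Set Ω, MeasurableSet[ℱ 0] s → P s = 0 ∨ P s = 1)
    (ε₀ : ℝ) (hε₀ : 0 < ε₀)
    (hστ : ∀ n : ℕ, IsStoppingTime ℱ (fun ω => ((tauSeq X T ε₀ n ω : ℝ) : WithTop ℝ)))
    (hretire : ∀ᵐ ω ∂P, ∃ n : ℕ, tauSeq X T ε₀ n ω = T)
    (Q : Measure Ω) [IsProbabilityMeasure Q] (hQP : Q ≪ P) (hPQ : P ≪ Q)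
    (hZmeas : ∀ n : ℕ, StronglyMeasurable[(hστ n).measurableSpace] (Zseq X T ε₀ n))
    (hZint : ∀ n : ℕ, Integrable (Zseq X T ε₀ n) Q)
    (hZmart : ∀ n : ℕ,
      Q[Zseq X T ε₀ (n + 1) | (hστ n).measurableSpace] =ᵐ[Q] Zseq X T ε₀ n)
    (hUI : UniformIntegrable (Zseq X T ε₀) 1 Q)
    (Zinf : Ω → ℝ)
    (hZinf : ∀ᵐ ω ∂Q, Tendsto (fun n => Zseq X T ε₀ n ω) atTop (nhds (Zinf ω))) :
    (∀ t ∈ Icc (0:ℝ) T, ∀ᵐ ω ∂P,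
      ((1 + ε₀) ^ 3)⁻¹ * Real.exp (X t ω) ≤ (Q[Zinf | ℱ t]) ω ∧
      (Q[Zinf | ℱ t]) ω ≤ (1 + ε₀) ^ 3 * Real.exp (X t ω)) ∧
    AdmitsCPS P ℱ T (fun t ω => Real.exp (X t ω)) ((1 + ε₀) ^ 3 - 1) := by
  classical
  have hy1 : (1:ℝ) < 1 + ε₀ := by linarith
  have hy0 : (0:ℝ) < 1 + ε₀ := by linarith
  have hexpL : Real.exp (Real.log (1 + ε₀)) = 1 + ε₀ := Real.exp_log hy0
  have hτle : ∀ n, ∀ ω, tauSeq X T ε₀ n ω ≤ T := fun n ω => (tau_bdd hT n).2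
  have hστ' : ∀ n (t : ℝ), MeasurableSet[ℱ t] {ω | tauSeq X T ε₀ n ω ≤ t} :=
    fun n t => by simpa only [WithTop.coe_le_coe] using hστ n t
  have hGle : ∀ n, (hστ n).measurableSpace ≤ m :=
    fun n => (hστ n).measurableSpace_le_of_le (fun ω => WithTop.coe_le_coe.2 (hτle n ω))
  set 𝒢 : Filtration ℕ m :=
    { seq := fun n => (hστ n).measurableSpace
      mono' := fun i j hij => IsStoppingTime.measurableSpace_mono (hστ i) (hστ j)
        (fun ω => WithTop.coe_le_coe.2 (monotone_nat_of_le_succ (f := fun n => tauSeq X T ε₀ n ω)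
          (fun n => tau_le_succ hT n) hij))
      le' := hGle } with h𝒢
  have hmartZ : Martingale (Zseq X T ε₀) 𝒢 Q := by
    refine ⟨fun n => hZmeas n, ?_⟩
    intro i j hij
    induction j, hij using Nat.le_induction with
    | base =>
      rw [condExp_of_stronglyMeasurable (hGle i) (hZmeas i) (hZint i)]
    | succ j hij ih =>
      have h1 : Q[Zseq X T ε₀ (j + 1)|𝒢 i] =ᵐ[Q] Q[Q[Zseq X T ε₀ (j + 1)|𝒢 j]|𝒢 i] :=
        (condExp_condExp_of_le (𝒢.mono hij) (𝒢.le j)).symm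
      exact h1.trans ((condExp_congr_ae (hZmart j)).trans ih)
  have htendsLim := hmartZ.submartingale.ae_tendsto_limitProcess_of_uniformIntegrable hUI
  have hZinfQ : Zinf =ᵐ[Q] 𝒢.limitProcess (Zseq X T ε₀) Q := by
    filter_upwards [hZinf, htendsLim] with ω h1 h2 using tendsto_nhds_unique h1 h2
  have hZinfInt : Integrable Zinf Q := by
    obtain ⟨R, hR⟩ := hUI.2.2
    exact ((hmartZ.submartingale.memLp_limitProcess hR).integrable le_rfl).congr hZinfQ.symm
  have hclose : ∀ n, Q[Zinf | 𝒢 n] =ᵐ[Q] Zseq X T ε₀ n :=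
    fun n => (condExp_congr_ae hZinfQ).trans (hmartZ.ae_eq_condExp_limitProcess hUI n).symm
  have hretireQ : ∀ᵐ ω ∂Q, ∃ n : ℕ, tauSeq X T ε₀ n ω = T :=
    hretire.filter_mono hQP.ae_le
  have hpow23 : ((1:ℝ) + ε₀) ^ 2 ≤ (1 + ε₀) ^ 3 := by nlinarith
  have hpow13 : ((1:ℝ) + ε₀) ≤ (1 + ε₀) ^ 3 := by nlinarith
  have hpow3pos : (0:ℝ) < (1 + ε₀) ^ 3 := by positivity
  -- main bound, Q-a.e.
  have key : ∀ t ∈ Icc (0:ℝ) T, ∀ᵐ ω ∂Q,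
      ((1 + ε₀) ^ 3)⁻¹ * Real.exp (X t ω) ≤ (Q[Zinf | ℱ t]) ω ∧
      (Q[Zinf | ℱ t]) ω ≤ (1 + ε₀) ^ 3 * Real.exp (X t ω) := by
    intro t ht
    rcases lt_or_eq_of_le ht.2 with htT | htT
    · -- case t < T
      set A : ℕ → Set Ω := fun n =>
        {ω | tauSeq X T ε₀ n ω ≤ t ∧ t < tauSeq X T ε₀ (n + 1) ω} with hA
      have hAmeas : ∀ n, MeasurableSet[ℱ t] (A n) := by
        intro n
        have : A n = {ω | tauSeq X T ε₀ n ω ≤ t} ∩ {ω | tauSeq X T ε₀ (n + 1) ω ≤ t}ᶜ := by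
          ext ω; simp [hA, not_le, and_comm]
        rw [this]
        exact (hστ' n t).inter (hστ' (n + 1) t).compl
      have hAmeasm : ∀ n, MeasurableSet (A n) := fun n => ℱ.le t _ (hAmeas n)
      have hGmem : ∀ n, ∀ B : Set Ω, MeasurableSet[ℱ t] B →
          MeasurableSet[𝒢 (n + 1)] (B ∩ A n) := by
        intro n B hB
        rw [show (𝒢 (n+1) : MeasurableSpace Ω) = (hστ (n+1)).measurableSpace from rfl,
          (hστ (n + 1)).measurableSet]
        refine ⟨(le_iSup (fun s => (ℱ s : MeasurableSpace Ω)) t) _ (hB.inter (hAmeas n)), fun u => ?_⟩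
        simp only [WithTop.coe_le_coe]
        rcases le_or_gt t u with htu | htu
        · have h1 : MeasurableSet[ℱ u] B := ℱ.mono htu _ hB
          have h2 : MeasurableSet[ℱ u] {ω | tauSeq X T ε₀ n ω ≤ t} := ℱ.mono htu _ (hστ' n t)
          have h3 : MeasurableSet[ℱ u] ({ω | tauSeq X T ε₀ (n + 1) ω ≤ t}ᶜ) :=
            (ℱ.mono htu _ (hστ' (n + 1) t)).compl
          have h4 : MeasurableSet[ℱ u] {ω | tauSeq X T ε₀ (n + 1) ω ≤ u} := hστ' (n + 1) u
          have : B ∩ A n ∩ {ω | tauSeq X T ε₀ (n + 1) ω ≤ u} =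
              (B ∩ ({ω | tauSeq X T ε₀ n ω ≤ t} ∩ {ω | tauSeq X T ε₀ (n + 1) ω ≤ t}ᶜ)) ∩
                {ω | tauSeq X T ε₀ (n + 1) ω ≤ u} := by
            ext ω
            simp only [hA, mem_inter_iff, mem_setOf_eq, mem_compl_iff, not_le]
            try tauto
          rw [this]
          exact (h1.inter (h2.inter h3)).inter h4
        · have : B ∩ A n ∩ {ω | tauSeq X T ε₀ (n + 1) ω ≤ u} = ∅ := by
            ext ω
            simp only [hA, mem_inter_iff, mem_setOf_eq, mem_empty_iff_false, iff_false]
            rintro ⟨⟨-, -, h2⟩, h3⟩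
            linarith
          rw [this]
          exact @MeasurableSet.empty _ (ℱ u)
      -- swap lemma
      have hswap : ∀ n, Q[(A n).indicator Zinf | ℱ t]
          =ᵐ[Q] Q[(A n).indicator (Zseq X T ε₀ (n + 1)) | ℱ t] := by
        intro n
        have hindint : Integrable ((A n).indicator Zinf) Q := hZinfInt.indicator (hAmeasm n)
        have hindint' : Integrable ((A n).indicator (Zseq X T ε₀ (n + 1))) Q :=
          (hZint (n + 1)).indicator (hAmeasm n)
        refine ae_eq_condExp_of_forall_setIntegral_eq (ℱ.le t) hindint'
          (fun s _ _ => integrable_condExp.integrableOn) (fun s hs _ => ?_)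
          stronglyMeasurable_condExp.aestronglyMeasurable
        rw [setIntegral_condExp (ℱ.le t) hindint hs]
        rw [setIntegral_indicator (hAmeasm n), setIntegral_indicator (hAmeasm n)]
        have hsm : MeasurableSet[𝒢 (n + 1)] (s ∩ A n) := hGmem n s hs
        have e1 := setIntegral_condExp (𝒢.le (n + 1)) hZinfInt hsm
        have e2 : ∫ ω in s ∩ A n, (Q[Zinf | 𝒢 (n + 1)]) ω ∂Q
            = ∫ ω in s ∩ A n, Zseq X T ε₀ (n + 1) ω ∂Q :=
          setIntegral_congr_ae ((𝒢.le (n + 1)) _ hsm)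
            ((hclose (n + 1)).mono fun ω hω _ => hω)
        rw [← e1, e2]
      -- pointwise band as indicator inequalities
      have hφm : StronglyMeasurable[ℱ t] (fun ω => Real.exp (X t ω)) :=
        Real.continuous_exp.comp_stronglyMeasurable (hadp t).stronglyMeasurable
      set c : ℝ := (1 + ε₀) ^ 2 with hc
      have hcpos : (0:ℝ) < c := by positivity
      have hband : ∀ n, ∀ ω ∈ A n,
          Real.exp (X t ω) ≤ c * Zseq X T ε₀ (n + 1) ω ∧
          Zseq X T ε₀ (n + 1) ω ≤ c * Real.exp (X t ω) := by
        intro n ω hω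
        exact Zseq_band hT hε₀ (hcont ω) hω.1 hω.2
      have hZpos : ∀ n ω, 0 < Zseq X T ε₀ n ω := by
        intro n ω
        exact mul_pos (Real.exp_pos _) (Real.rpow_pos_of_pos hy0 _)
      have hup_int : ∀ n, Integrable ((A n).indicator fun ω => c * Real.exp (X t ω)) Q := by
        intro n
        refine Integrable.mono' ((hZint (n + 1)).abs.const_mul (c * c)) ?_ ?_
        · exact (((hφm.const_mul c).indicator (hAmeas n)).mono (ℱ.le t)).aestronglyMeasurable
        · refine Eventually.of_forall fun ω => ?_
          rw [Real.norm_eq_abs]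
          by_cases hω : ω ∈ A n
          · rw [Set.indicator_of_mem hω, abs_of_pos (by positivity)]
            have h1 := (hband n ω hω).1
            have h2 := le_abs_self (Zseq X T ε₀ (n + 1) ω)
            calc c * Real.exp (X t ω) ≤ c * (c * Zseq X T ε₀ (n + 1) ω) := by nlinarith
              _ ≤ c * c * |Zseq X T ε₀ (n + 1) ω| := by nlinarith
          · rw [Set.indicator_of_notMem hω, abs_zero]
            positivity
      have hlo_int : ∀ n, Integrable ((A n).indicator fun ω => c⁻¹ * Real.exp (X t ω)) Q := by
        intro n
        refine Integrable.mono' ((hZint (n + 1)).abs.const_mul (c * c)) ?_ ?_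
        · exact (((hφm.const_mul c⁻¹).indicator (hAmeas n)).mono (ℱ.le t)).aestronglyMeasurable
        · refine Eventually.of_forall fun ω => ?_
          rw [Real.norm_eq_abs]
          by_cases hω : ω ∈ A n
          · rw [Set.indicator_of_mem hω, abs_of_pos (by positivity)]
            have h1 := (hband n ω hω).1
            have h2 := le_abs_self (Zseq X T ε₀ (n + 1) ω)
            have hc1 : c⁻¹ ≤ c := by
              rw [inv_le_iff_one_le_mul₀ hcpos]
              nlinarith
            calc c⁻¹ * Real.exp (X t ω) ≤ c * Real.exp (X t ω) := by
                  have := Real.exp_pos (X t ω); nlinarith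
              _ ≤ c * (c * Zseq X T ε₀ (n + 1) ω) := by nlinarith
              _ ≤ c * c * |Zseq X T ε₀ (n + 1) ω| := by nlinarith
          · rw [Set.indicator_of_notMem hω, abs_zero]
            positivity
      have hcup : ∀ n, Q[(A n).indicator (Zseq X T ε₀ (n + 1)) | ℱ t] ≤ᵐ[Q]
          (A n).indicator fun ω => c * Real.exp (X t ω) := by
        intro n
        have hmono := condExp_mono (m := ℱ t) ((hZint (n + 1)).indicator (hAmeasm n))
          (hup_int n) (Eventually.of_forall fun ω => ?_)
        · have heq := condExp_of_stronglyMeasurable (ℱ.le t)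
            ((hφm.const_mul c).indicator (hAmeas n)) (hup_int n)
          rwa [heq] at hmono
        · by_cases hω : ω ∈ A n
          · rw [Set.indicator_of_mem hω, Set.indicator_of_mem hω]
            exact (hband n ω hω).2
          · rw [Set.indicator_of_notMem hω, Set.indicator_of_notMem hω]
      have hclo : ∀ n, ((A n).indicator fun ω => c⁻¹ * Real.exp (X t ω)) ≤ᵐ[Q]
          Q[(A n).indicator (Zseq X T ε₀ (n + 1)) | ℱ t] := by
        intro n
        have hmono := condExp_mono (m := ℱ t) (hlo_int n)
          ((hZint (n + 1)).indicator (hAmeasm n)) (Eventually.of_forall fun ω => ?_)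
        · have heq := condExp_of_stronglyMeasurable (ℱ.le t)
            ((hφm.const_mul c⁻¹).indicator (hAmeas n)) (hlo_int n)
          rwa [heq] at hmono
        · by_cases hω : ω ∈ A n
          · rw [Set.indicator_of_mem hω, Set.indicator_of_mem hω]
            have h1 := (hband n ω hω).1
            have : c⁻¹ * Real.exp (X t ω) ≤ c⁻¹ * (c * Zseq X T ε₀ (n + 1) ω) :=
              mul_le_mul_of_nonneg_left h1 (inv_nonneg.2 hcpos.le)
            rwa [← mul_assoc, inv_mul_cancel₀ hcpos.ne', one_mul] at this
          · rw [Set.indicator_of_notMem hω, Set.indicator_of_notMem hω]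
      have hindA : ∀ n, Q[(A n).indicator Zinf | ℱ t] =ᵐ[Q]
          (A n).indicator (Q[Zinf | ℱ t]) := fun n => condExp_indicator hZinfInt (hAmeas n)
      filter_upwards [hretireQ, ae_all_iff.2 hswap, ae_all_iff.2 hcup, ae_all_iff.2 hclo,
        ae_all_iff.2 hindA] with ω hret hsw hcu hcl hind
      obtain ⟨n0, hn01, hn02⟩ := exists_retire hT hret
      have hPex : ∃ k, t < tauSeq X T ε₀ (k + 1) ω := ⟨n0, by rw [hn02]; exact htT⟩
      set n := Nat.find hPex with hn
      have hn2 : t < tauSeq X T ε₀ (n + 1) ω := Nat.find_spec hPex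
      have hn1 : tauSeq X T ε₀ n ω ≤ t := by
        rcases Nat.eq_zero_or_pos n with h0 | h0
        · rw [h0]; exact ht.1
        · have hmin := Nat.find_min hPex (m := n - 1) (by omega)
          push_neg at hmin
          have : tauSeq X T ε₀ (n - 1 + 1) ω ≤ t := hmin
          rwa [show n - 1 + 1 = n from by omega] at this
      have hωA : ω ∈ A n := ⟨hn1, hn2⟩
      have hgval : (Q[Zinf | ℱ t]) ω = (Q[(A n).indicator (Zseq X T ε₀ (n + 1)) | ℱ t]) ω := by
        have e1 := hind n
        rw [Set.indicator_of_mem hωA] at e1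
        rw [← e1, hsw n]
      have hub : (Q[(A n).indicator (Zseq X T ε₀ (n + 1)) | ℱ t]) ω ≤ c * Real.exp (X t ω) := by
        have := hcu n
        rwa [Set.indicator_of_mem hωA] at this
      have hlb : c⁻¹ * Real.exp (X t ω) ≤
          (Q[(A n).indicator (Zseq X T ε₀ (n + 1)) | ℱ t]) ω := by
        have := hcl n
        rwa [Set.indicator_of_mem hωA] at this
      have hinv : ((1 + ε₀) ^ 3)⁻¹ ≤ c⁻¹ := by
        apply inv_anti₀ hcpos hpow23
      have hexp0 : (0:ℝ) ≤ Real.exp (X t ω) := (Real.exp_pos _).le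
      constructor
      · calc ((1 + ε₀) ^ 3)⁻¹ * Real.exp (X t ω) ≤ c⁻¹ * Real.exp (X t ω) :=
            mul_le_mul_of_nonneg_right hinv hexp0
          _ ≤ _ := by rw [hgval]; exact hlb
      · calc (Q[Zinf | ℱ t]) ω ≤ c * Real.exp (X t ω) := by rw [hgval]; exact hub
          _ ≤ (1 + ε₀) ^ 3 * Real.exp (X t ω) := mul_le_mul_of_nonneg_right hpow23 hexp0
    · -- case t = T
      subst htT
      have hZb : ∀ᵐ ω ∂Q, Real.exp (X t ω) ≤ (1 + ε₀) ^ 2 * Zinf ω ∧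
          Zinf ω ≤ (1 + ε₀) ^ 2 * Real.exp (X t ω) := by
        filter_upwards [hZinf, hretireQ] with ω h1 h2
        obtain ⟨n, hn1, hn2⟩ := exists_retire hT h2
        have hev := Zseq_eventually hT hε₀ (hcont ω) hn1 hn2
        have hZeq : Zinf ω = Real.exp (X (tauSeq X t ε₀ n ω) ω) :=
          tendsto_nhds_unique h1 (tendsto_atTop_of_eventually_const hev)
        have hlt : tauSeq X t ε₀ n ω < tauSeq X t ε₀ (n + 1) ω := by rw [hn2]; exact hn1
        have hIcc := tau_band_closed hT (hcont ω) (ε₀ := ε₀) hlt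
        rw [hn2] at hIcc
        have h1' : |X t ω - X (tauSeq X t ε₀ n ω) ω| ≤ Real.log (1 + ε₀) :=
          abs_le.2 ⟨hIcc.1, hIcc.2⟩
        have habs : |X (tauSeq X t ε₀ n ω) ω - X t ω| ≤ 2 * Real.log (1 + ε₀) := by
          rw [abs_sub_comm]
          have hL := Real.log_pos hy1
          linarith
        rw [hZeq]
        exact ⟨(exp_band hexpL habs).2, (exp_band hexpL habs).1⟩
      have h2pos : (0:ℝ) < (1 + ε₀) ^ 2 := by positivity
      have hintexp : Integrable (fun ω => Real.exp (X t ω)) Q := by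
        refine Integrable.mono' (hZinfInt.abs.const_mul ((1 + ε₀) ^ 2)) ?_ ?_
        · exact (Real.continuous_exp.comp_stronglyMeasurable
            ((hadp t).stronglyMeasurable.mono (ℱ.le t))).aestronglyMeasurable
        · filter_upwards [hZb] with ω h
          rw [Real.norm_eq_abs, abs_of_pos (Real.exp_pos _)]
          have habs := le_abs_self (Zinf ω)
          nlinarith [h.1]
      have hφmT : StronglyMeasurable[ℱ t] (fun ω => Real.exp (X t ω)) :=
        Real.continuous_exp.comp_stronglyMeasurable (hadp t).stronglyMeasurable
      have hupper : Q[Zinf | ℱ t] ≤ᵐ[Q] fun ω => (1 + ε₀) ^ 2 * Real.exp (X t ω) := by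
        have hmono := condExp_mono (m := ℱ t) hZinfInt (hintexp.const_mul ((1 + ε₀) ^ 2))
          (hZb.mono fun ω h => h.2)
        have heq := condExp_of_stronglyMeasurable (ℱ.le t)
          (hφmT.const_mul ((1 + ε₀) ^ 2)) (hintexp.const_mul ((1 + ε₀) ^ 2))
        rwa [heq] at hmono
      have hlower : (fun ω => ((1 + ε₀) ^ 2)⁻¹ * Real.exp (X t ω)) ≤ᵐ[Q] Q[Zinf | ℱ t] := by
        have hmono := condExp_mono (m := ℱ t) (hintexp.const_mul (((1 + ε₀) ^ 2)⁻¹)) hZinfInt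
          (hZb.mono fun ω h => by
            have h1 := h.1
            have : ((1 + ε₀) ^ 2)⁻¹ * Real.exp (X t ω) ≤
                ((1 + ε₀) ^ 2)⁻¹ * ((1 + ε₀) ^ 2 * Zinf ω) :=
              mul_le_mul_of_nonneg_left h1 (inv_nonneg.2 h2pos.le)
            rwa [← mul_assoc, inv_mul_cancel₀ h2pos.ne', one_mul] at this)
        have heq := condExp_of_stronglyMeasurable (ℱ.le t)
          (hφmT.const_mul (((1 + ε₀) ^ 2)⁻¹)) (hintexp.const_mul (((1 + ε₀) ^ 2)⁻¹))
        rwa [heq] at hmono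
      filter_upwards [hupper, hlower] with ω h1 h2
      have hexp0 : (0:ℝ) ≤ Real.exp (X t ω) := (Real.exp_pos _).le
      have hinv : ((1 + ε₀) ^ 3)⁻¹ ≤ ((1 + ε₀) ^ 2)⁻¹ := inv_anti₀ h2pos hpow23
      constructor
      · calc ((1 + ε₀) ^ 3)⁻¹ * Real.exp (X t ω) ≤ ((1 + ε₀) ^ 2)⁻¹ * Real.exp (X t ω) :=
            mul_le_mul_of_nonneg_right hinv hexp0
          _ ≤ _ := h2
      · calc (Q[Zinf | ℱ t]) ω ≤ (1 + ε₀) ^ 2 * Real.exp (X t ω) := h1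
          _ ≤ (1 + ε₀) ^ 3 * Real.exp (X t ω) := mul_le_mul_of_nonneg_right hpow23 hexp0
  -- conclude
  have keyP : ∀ t ∈ Icc (0:ℝ) T, ∀ᵐ ω ∂P,
      ((1 + ε₀) ^ 3)⁻¹ * Real.exp (X t ω) ≤ (Q[Zinf | ℱ t]) ω ∧
      (Q[Zinf | ℱ t]) ω ≤ (1 + ε₀) ^ 3 * Real.exp (X t ω) :=
    fun t ht => (key t ht).filter_mono hPQ.ae_le
  refine ⟨keyP, Q, fun s => Q[Zinf | ℱ s], inferInstance, hQP, hPQ,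
    fun t _ => stronglyMeasurable_condExp, fun t _ => integrable_condExp,
    fun s _ t ht hst => condExp_condExp_of_le (ℱ.mono hst) (ℱ.le t), fun t ht => ?_⟩
  filter_upwards [keyP t ht] with ω h
  rw [show (1 + ((1 + ε₀) ^ 3 - 1) : ℝ) = (1 + ε₀) ^ 3 from by ring]
  exact h

end
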